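/- Every outcome in RC(≻_1, ≻_2) is Pareto optimal: if o ∈ B_v^1 ∩ B_v^2 for the minimal such v, then there is no outcome o' ∈ O with o' ≻_1 o and o' ≻_2 o. -/
import Mathlib


def IsTopSet {α : Type*} (O : Finset α) (r : α → ℕ) (v : ℕ) (B : Finset α) : Prop :=
  B ⊆ O ∧ B.card = v ∧ ∀ a ∈ B, ∀ b ∈ O, b ∉ B → r b < r a

lemma erase_top_set {α : Type*} [DecidableEq α] (O : Finset α) (r : α → ℕ) (v : ℕ)
    (B : Finset α) (h : IsTopSet O r v B) (hinj : Set.InjOn r O)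
    (m : α) (hm : m ∈ B) (hmin : ∀ b ∈ B, r m ≤ r b) :
    IsTopSet O r (v - 1) (B.erase m) := by
  obtain ⟨hsub, hcard, htop⟩ := h
  refine ⟨(Finset.erase_subset m B).trans hsub, by rw [Finset.card_erase_of_mem hm, hcard], ?_⟩
  intro a ha b hb hbn
  have haB := Finset.mem_of_mem_erase ha
  by_cases hbB : b ∈ B
  · have : b = m := by
      by_contra hne
      exact hbn (Finset.mem_erase.mpr ⟨hne, hbB⟩)
    subst this
    have hle := hmin a haB
    have hne : r b ≠ r a := fun he =>
      (Finset.ne_of_mem_erase ha).symm (hinj (hsub hbB) (hsub haB) he)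
    omega
  · exact htop a haB b hb hbB

/-- every outcome in `RC(≻_1, ≻_2)` is Pareto optimal: if
`o ∈ B_v^1 ∩ B_v^2` for the minimal `v` with nonempty intersection, then no
outcome is strictly preferred to `o` by both parties. -/
theorem rc_pareto_optimal {α : Type*} [DecidableEq α]
    (O : Finset α) (r1 r2 : α → ℕ)
    (h1 : Set.InjOn r1 O) (h2 : Set.InjOn r2 O)
    (v : ℕ) (B1 B2 : Finset α)
    (hB1 : IsTopSet O r1 v B1) (hB2 : IsTopSet O r2 v B2)
    (hmin : ∀ v' < v, ∀ C1 C2 : Finset α, IsTopSet O r1 v' C1 → IsTopSet O r2 v' C2 →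
      C1 ∩ C2 = ∅)
    (o : α) (ho : o ∈ B1 ∩ B2) :
    ¬ ∃ o' ∈ O, r1 o < r1 o' ∧ r2 o < r2 o' := by
  rintro ⟨o', ho', hr1, hr2⟩
  have hoB1 : o ∈ B1 := (Finset.mem_inter.mp ho).1
  have hoB2 : o ∈ B2 := (Finset.mem_inter.mp ho).2
  have ho'B1 : o' ∈ B1 := by
    by_contra h
    exact absurd (hB1.2.2 o hoB1 o' ho' h) (by omega)
  have ho'B2 : o' ∈ B2 := by
    by_contra h
    exact absurd (hB2.2.2 o hoB2 o' ho' h) (by omega)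
  obtain ⟨m1, hm1, hmin1⟩ := B1.exists_min_image r1 ⟨o, hoB1⟩
  obtain ⟨m2, hm2, hmin2⟩ := B2.exists_min_image r2 ⟨o, hoB2⟩
  have hv : 0 < v := hB1.2.1 ▸ Finset.card_pos.mpr ⟨o, hoB1⟩
  have hC1 := erase_top_set O r1 v B1 hB1 h1 m1 hm1 hmin1
  have hC2 := erase_top_set O r2 v B2 hB2 h2 m2 hm2 hmin2
  have hE := hmin (v - 1) (by omega) _ _ hC1 hC2
  have ho'1 : o' ∈ B1.erase m1 := Finset.mem_erase.mpr
    ⟨fun h => by subst h; have := hmin1 o hoB1; omega, ho'B1⟩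
  have ho'2 : o' ∈ B2.erase m2 := Finset.mem_erase.mpr
    ⟨fun h => by subst h; have := hmin2 o hoB2; omega, ho'B2⟩
  exact absurd hE (Finset.ne_empty_of_mem (Finset.mem_inter.mpr ⟨ho'1, ho'2⟩))
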